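/- Let R be a commutative ring, V₁, V₂ and M R-modules, u: V₂ → V₁ an R-linear map, and t ∈ V₂ ⊗_R M. For each commutative R-algebra S let i_S: Hom_S(V₁ ⊗_R S, S) → Hom_S(V₂ ⊗_R S, S) be precomposition with u ⊗ id_S, and let π_S: Hom_S(V₂ ⊗_R S, S) → M ⊗_R S be contraction against t (if t = Σ_k v_k ⊗ m_k then π_S(w) = Σ_k w(v_k ⊗ 1)·(m_k ⊗ 1)). If for every commutative R-algebra S the sequence 0 → Hom_S(V₁ ⊗_R S, S) → Hom_S(V₂ ⊗_R S, S) → M ⊗_R S → 0 is exact, then M is a finitely generated projective R-module. -/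

import Mathlib

open TensorProduct

universe u

/-- Contraction against `t ∈ V₂ ⊗_R M`: it sends an `S`-linear form `w` on `V₂ ⊗_R S` to
`Σ_k w(v_k ⊗ 1)·(m_k ⊗ 1) ∈ M ⊗_R S`, where `t = Σ_k v_k ⊗ m_k`. -/
noncomputable def contractAgainst (R V₂ M : Type u) [CommRing R]
    [AddCommGroup V₂] [Module R V₂] [AddCommGroup M] [Module R M]
    (t : V₂ ⊗[R] M) (S : Type u) [CommRing S] [Algebra R S]
    (w : (S ⊗[R] V₂) →ₗ[S] S) : S ⊗[R] M :=
  LinearMap.rTensor M ((w.restrictScalars R) ∘ₗ TensorProduct.mk R S V₂ 1) t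

section Aux

variable {R V₁ V₂ M : Type u} [CommRing R] [AddCommGroup V₁] [Module R V₁]
    [AddCommGroup V₂] [Module R V₂] [AddCommGroup M] [Module R M]

/-- Module-level key lemma extracted from the algebra-level exactness hypothesis, by applying it
to the trivial square-zero extension `R ⊕ N`. -/
theorem keyLemma (u : V₂ →ₗ[R] V₁) (t : V₂ ⊗[R] M)
    (hex : ∀ (S : Type u) [CommRing S] [Algebra R S],
      Function.Injective (fun w : (S ⊗[R] V₁) →ₗ[S] S => w ∘ₗ u.baseChange S) ∧
      (∀ w : (S ⊗[R] V₂) →ₗ[S] S,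
        contractAgainst R V₂ M t S w = 0 ↔
          w ∈ Set.range (fun w' : (S ⊗[R] V₁) →ₗ[S] S => w' ∘ₗ u.baseChange S)) ∧
      Function.Surjective (fun w : (S ⊗[R] V₂) →ₗ[S] S => contractAgainst R V₂ M t S w))
    (N : Type u) [AddCommGroup N] [Module R N] :
    (∀ z : V₁ →ₗ[R] N, z ∘ₗ u = 0 → z = 0) ∧
    (∀ w : V₂ →ₗ[R] N, LinearMap.rTensor M w t = 0 ↔ ∃ z : V₁ →ₗ[R] N, w = z ∘ₗ u) ∧
    (∀ x : N ⊗[R] M, ∃ w : V₂ →ₗ[R] N, LinearMap.rTensor M w t = x) := by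
  letI : Module Rᵐᵒᵖ N := Module.compHom N ((RingHom.id R).fromOpposite mul_comm)
  haveI : IsCentralScalar R N := ⟨fun r m => rfl⟩
  obtain ⟨h1, h2, h3⟩ := hex (TrivSqZeroExt R N)
  set S := TrivSqZeroExt R N with hSdef
  set inr' : N →ₗ[R] S := TrivSqZeroExt.inrHom R N with hinr
  set snd' : S →ₗ[R] N := TrivSqZeroExt.sndHom R N with hsnd
  have hsi : snd' ∘ₗ inr' = LinearMap.id := by
    apply LinearMap.ext; intro n
    rfl
  have hinj : ∀ x : N ⊗[R] M, LinearMap.rTensor M inr' x = 0 → x = 0 := by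
    intro x hx
    have h : LinearMap.rTensor M (snd' ∘ₗ inr') x = 0 := by
      rw [LinearMap.rTensor_comp, LinearMap.comp_apply, hx, map_zero]
    rwa [hsi, LinearMap.rTensor_id, LinearMap.id_apply] at h
  have hres : ∀ (g : V₂ →ₗ[R] S),
      ((LinearMap.liftBaseChange S g).restrictScalars R) ∘ₗ TensorProduct.mk R S V₂ 1 = g := by
    intro g
    apply LinearMap.ext; intro v
    simp
  have hcl : ∀ (g : V₂ →ₗ[R] S),
      contractAgainst R V₂ M t S (LinearMap.liftBaseChange S g) = LinearMap.rTensor M g t := by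
    intro g; rw [contractAgainst, hres]
  have hlc : ∀ (g : V₁ →ₗ[R] S),
      (LinearMap.liftBaseChange S g) ∘ₗ u.baseChange S
        = LinearMap.liftBaseChange S (g ∘ₗ u) := by
    intro g
    apply LinearMap.restrictScalars_injective R
    apply TensorProduct.ext'
    intro s v
    simp
  refine ⟨?_, ?_, ?_⟩
  · -- injectivity
    intro z hz
    have hZ : (fun w : (S ⊗[R] V₁) →ₗ[S] S => w ∘ₗ u.baseChange S)
        (LinearMap.liftBaseChange S (inr' ∘ₗ z))
        = (fun w : (S ⊗[R] V₁) →ₗ[S] S => w ∘ₗ u.baseChange S) 0 := by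
      show LinearMap.liftBaseChange S (inr' ∘ₗ z) ∘ₗ u.baseChange S
          = (0 : (S ⊗[R] V₁) →ₗ[S] S) ∘ₗ u.baseChange S
      rw [hlc, LinearMap.zero_comp, LinearMap.comp_assoc, hz, LinearMap.comp_zero]
      apply LinearMap.restrictScalars_injective R
      apply TensorProduct.ext'
      intro s v
      simp
    have hZ0 := h1 hZ
    apply LinearMap.ext; intro v
    have hv := congrArg (fun (W : (S ⊗[R] V₁) →ₗ[S] S) => snd' (W ((1 : S) ⊗ₜ[R] v))) hZ0
    simp [hinr, hsnd, TrivSqZeroExt.snd_inr] at hv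
    exact (LinearMap.congr_fun hsi (z v)).symm.trans hv
  · -- exactness in the middle
    intro w
    constructor
    · intro hw
      have hc0 : contractAgainst R V₂ M t S (LinearMap.liftBaseChange S (inr' ∘ₗ w)) = 0 := by
        rw [hcl, LinearMap.rTensor_comp, LinearMap.comp_apply, hw, map_zero]
      obtain ⟨W', hW'⟩ := (h2 _).mp hc0
      refine ⟨snd' ∘ₗ ((W'.restrictScalars R) ∘ₗ TensorProduct.mk R S V₁ 1), ?_⟩
      apply LinearMap.ext; intro v
      have hv := congrArg (fun (W : (S ⊗[R] V₂) →ₗ[S] S) => snd' (W ((1 : S) ⊗ₜ[R] v))) hW'.symm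
      simp [hinr, hsnd, TrivSqZeroExt.snd_inr] at hv
      exact (LinearMap.congr_fun hsi (w v)).symm.trans hv
    · rintro ⟨z, rfl⟩
      apply hinj
      have hc0 : contractAgainst R V₂ M t S
          (LinearMap.liftBaseChange S (inr' ∘ₗ (z ∘ₗ u))) = 0 := by
        rw [(h2 _)]
        refine ⟨LinearMap.liftBaseChange S (inr' ∘ₗ z), ?_⟩
        show LinearMap.liftBaseChange S (inr' ∘ₗ z) ∘ₗ u.baseChange S
            = LinearMap.liftBaseChange S (inr' ∘ₗ (z ∘ₗ u))
        rw [hlc, LinearMap.comp_assoc]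
      rw [hcl] at hc0
      rw [← LinearMap.comp_apply, ← LinearMap.rTensor_comp]
      exact hc0
  · -- surjectivity
    intro x
    obtain ⟨W, hW⟩ := h3 (LinearMap.rTensor M inr' x)
    refine ⟨snd' ∘ₗ ((W.restrictScalars R) ∘ₗ TensorProduct.mk R S V₂ 1), ?_⟩
    simp only [contractAgainst] at hW
    rw [LinearMap.rTensor_comp, LinearMap.comp_apply]
    rw [hW, ← LinearMap.comp_apply, ← LinearMap.rTensor_comp, hsi, LinearMap.rTensor_id,
      LinearMap.id_apply]

end Aux

/-- If `0 → Hom_S(V₁ ⊗_R S, S) → Hom_S(V₂ ⊗_R S, S) → M ⊗_R S → 0` is exact for every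
commutative `R`-algebra `S` (the first map being precomposition with `u ⊗ id_S`, the
second contraction against `t`), then `M` is a finitely generated projective module. -/
theorem finite_projective_of_dual_exact
    (R V₁ V₂ M : Type u) [CommRing R] [AddCommGroup V₁] [Module R V₁]
    [AddCommGroup V₂] [Module R V₂] [AddCommGroup M] [Module R M]
    (u : V₂ →ₗ[R] V₁) (t : V₂ ⊗[R] M)
    (hex : ∀ (S : Type u) [CommRing S] [Algebra R S],
      Function.Injective (fun w : (S ⊗[R] V₁) →ₗ[S] S => w ∘ₗ u.baseChange S) ∧
      (∀ w : (S ⊗[R] V₂) →ₗ[S] S,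
        contractAgainst R V₂ M t S w = 0 ↔
          w ∈ Set.range (fun w' : (S ⊗[R] V₁) →ₗ[S] S => w' ∘ₗ u.baseChange S)) ∧
      Function.Surjective (fun w : (S ⊗[R] V₂) →ₗ[S] S => contractAgainst R V₂ M t S w)) :
    Module.Finite R M ∧ Module.Projective R M := by
  classical
  have key := keyLemma u t hex
  obtain ⟨s, hs⟩ := TensorProduct.exists_finset t
  have hrep : ∀ (N : Type u) [AddCommGroup N] [Module R N] (w : V₂ →ₗ[R] N),
      LinearMap.rTensor M w t = ∑ i : {x // x ∈ s}, w i.1.1 ⊗ₜ[R] i.1.2 := by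
    intro N _ _ w
    rw [hs, map_sum, Finset.univ_eq_attach,
      Finset.sum_attach s (fun q => w q.1 ⊗ₜ[R] q.2)]
    simp
  set m : {x // x ∈ s} → M := fun i => i.1.2 with hm
  set p : ({x // x ∈ s} → R) →ₗ[R] M :=
    ∑ i : {x // x ∈ s}, (LinearMap.proj i).smulRight (m i) with hp
  have hpapp : ∀ f : {x // x ∈ s} → R, p f = ∑ i : {x // x ∈ s}, f i • m i := by
    intro f
    rw [hp]
    simp [LinearMap.sum_apply]
  have psurj : Function.Surjective p := by
    intro x
    obtain ⟨w, hw⟩ := (key R).2.2 ((TensorProduct.lid R M).symm x)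
    refine ⟨fun i => w i.1.1, ?_⟩
    apply (TensorProduct.lid R M).symm.injective
    rw [hpapp, ← hw, hrep R w, map_sum]
    simp [hm, TensorProduct.smul_tmul']
  haveI hflat : Module.Flat R M := by
    rw [Module.Flat.iff_rTensor_injective]
    intro I _
    rw [← LinearMap.ker_eq_bot, LinearMap.ker_eq_bot']
    intro x hx
    obtain ⟨w, hw⟩ := (key I).2.2 x
    have h0 : LinearMap.rTensor M (I.subtype ∘ₗ w) t = 0 := by
      rw [LinearMap.rTensor_comp, LinearMap.comp_apply, hw, hx]
    obtain ⟨z, hz⟩ := ((key R).2.1 (I.subtype ∘ₗ w)).mp h0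
    have hzI : ∀ v, z v ∈ I := by
      have hcomp : (I.mkQ ∘ₗ z) ∘ₗ u = 0 := by
        apply LinearMap.ext; intro v
        have hv := LinearMap.congr_fun hz v
        simp only [LinearMap.comp_apply] at hv ⊢
        rw [← hv, LinearMap.zero_apply, Submodule.mkQ_apply, Submodule.Quotient.mk_eq_zero]
        exact (w v).2
      have hz0 := (key (R ⧸ I)).1 (I.mkQ ∘ₗ z) hcomp
      intro v
      have hv := LinearMap.congr_fun hz0 v
      simp only [LinearMap.comp_apply, LinearMap.zero_apply, Submodule.mkQ_apply] at hv
      exact (Submodule.Quotient.mk_eq_zero I).mp hv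
    have hwz : w = (z.codRestrict I hzI) ∘ₗ u := by
      apply LinearMap.ext; intro v
      have hv := LinearMap.congr_fun hz v
      apply Subtype.ext
      simpa using hv
    rw [← hw, hwz]
    exact ((key I).2.1 _).mpr ⟨z.codRestrict I hzI, rfl⟩
  set K := LinearMap.ker p with hK
  have inj2 : ∀ x : ({f // f ∈ K} → R) ⊗[R] M,
      (∀ k : {f // f ∈ K},
        LinearMap.rTensor M (LinearMap.proj k : ({f // f ∈ K} → R) →ₗ[R] R) x = 0) → x = 0 := by
    intro x hx
    obtain ⟨w, hw⟩ := (key ({f // f ∈ K} → R)).2.2 x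
    have hzk : ∀ k : {f // f ∈ K}, ∃ z : V₁ →ₗ[R] R,
        (LinearMap.proj k : ({f // f ∈ K} → R) →ₗ[R] R) ∘ₗ w = z ∘ₗ u := by
      intro k
      apply ((key R).2.1 _).mp
      rw [LinearMap.rTensor_comp, LinearMap.comp_apply, hw]
      exact hx k
    choose zk hzk using hzk
    have hwz : w = (LinearMap.pi zk) ∘ₗ u := by
      apply LinearMap.ext; intro v
      funext k
      have hv := LinearMap.congr_fun (hzk k) v
      simpa using hv
    rw [← hw, hwz]
    exact ((key ({f // f ∈ K} → R)).2.1 _).mpr ⟨LinearMap.pi zk, rfl⟩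
  set e : {x // x ∈ s} → ({x // x ∈ s} → R) := fun j => Pi.single j (1 : R) with he
  have hsingle : ∀ g : {x // x ∈ s} → R,
      ∑ j : {x // x ∈ s}, g j • e j = g := by
    intro g
    funext j'
    simp only [Finset.sum_apply, Pi.smul_apply, he]
    rw [Finset.sum_eq_single j']
    · simp
    · intro b _ hb
      simp [Pi.single_apply, hb]
    · simp
  set y : ({f // f ∈ K} → R) ⊗[R] ({x // x ∈ s} → R) :=
    ∑ j : {x // x ∈ s}, (fun k : {f // f ∈ K} => (k.1 : {x // x ∈ s} → R) j)
      ⊗ₜ[R] (e j) with hy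
  have hy0 : LinearMap.lTensor ({f // f ∈ K} → R) p y = 0 := by
    apply inj2
    intro k
    rw [hy, map_sum, map_sum]
    have hterm : ∀ j : {x // x ∈ s},
        LinearMap.rTensor M (LinearMap.proj k)
          (LinearMap.lTensor ({f // f ∈ K} → R) p
            ((fun k' : {f // f ∈ K} => (k'.1 : {x // x ∈ s} → R) j) ⊗ₜ[R] (e j)))
        = (1 : R) ⊗ₜ[R] ((k.1 : {x // x ∈ s} → R) j • p (e j)) := by
      intro j
      rw [LinearMap.lTensor_tmul, LinearMap.rTensor_tmul]
      simp only [LinearMap.proj_apply]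
      calc ((k.1 : {x // x ∈ s} → R) j) ⊗ₜ[R] (p (e j))
          = (((k.1 : {x // x ∈ s} → R) j) • (1 : R)) ⊗ₜ[R] (p (e j)) := by
            rw [smul_eq_mul, mul_one]
        _ = (1 : R) ⊗ₜ[R] (((k.1 : {x // x ∈ s} → R) j) • (p (e j))) :=
            TensorProduct.smul_tmul _ _ _
    have hsum : ∑ j : {x // x ∈ s},
        LinearMap.rTensor M (LinearMap.proj k)
          (LinearMap.lTensor ({f // f ∈ K} → R) p
            ((fun k' : {f // f ∈ K} => (k'.1 : {x // x ∈ s} → R) j) ⊗ₜ[R] (e j)))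
        = ∑ j : {x // x ∈ s},
            (1 : R) ⊗ₜ[R] ((k.1 : {x // x ∈ s} → R) j • p (e j)) :=
      Finset.sum_congr rfl (fun j _ => hterm j)
    rw [hsum, ← TensorProduct.tmul_sum]
    have hps : (∑ j : {x // x ∈ s}, (k.1 : {x // x ∈ s} → R) j • p (e j)) = p k.1 := by
      calc ∑ j : {x // x ∈ s}, (k.1 : {x // x ∈ s} → R) j • p (e j)
          = ∑ j : {x // x ∈ s}, p ((k.1 : {x // x ∈ s} → R) j • e j) := by
            simp [map_smul]
        _ = p (∑ j : {x // x ∈ s}, (k.1 : {x // x ∈ s} → R) j • e j) :=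
            (map_sum p _ _).symm
        _ = p k.1 := by rw [hsingle]
    rw [hps, LinearMap.mem_ker.mp k.2, TensorProduct.tmul_zero]
  have hexact : Function.Exact (LinearMap.lTensor ({f // f ∈ K} → R) K.subtype)
      (LinearMap.lTensor ({f // f ∈ K} → R) p) :=
    lTensor_exact ({f // f ∈ K} → R) (LinearMap.exact_subtype_ker_map p) psurj
  obtain ⟨y', hy'⟩ := (hexact y).mp hy0
  obtain ⟨F, hF⟩ := TensorProduct.exists_finset y'
  have hKfg : K.FG := by
    refine ⟨F.image (fun q => (q.2.1 : {x // x ∈ s} → R)), ?_⟩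
    apply le_antisymm
    · rw [Submodule.span_le]
      intro f hf
      simp only [Finset.coe_image, Set.mem_image, Finset.mem_coe] at hf
      obtain ⟨q, _, rfl⟩ := hf
      exact q.2.2
    · intro f hf
      set k0 : {f // f ∈ K} := ⟨f, hf⟩ with hk0
      set E : (({f // f ∈ K} → R) ⊗[R] ({x // x ∈ s} → R)) →ₗ[R] ({x // x ∈ s} → R) :=
        (TensorProduct.lid R ({x // x ∈ s} → R)).toLinearMap ∘ₗ
          LinearMap.rTensor ({x // x ∈ s} → R) (LinearMap.proj k0) with hE
      have hEtmul : ∀ (a : {f // f ∈ K} → R) (b : {x // x ∈ s} → R),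
          E (a ⊗ₜ[R] b) = a k0 • b := by
        intro a b
        simp [hE]
      have h1 : E y = f := by
        rw [hy, map_sum]
        have hc : ∀ j : {x // x ∈ s},
            E ((fun k' : {f // f ∈ K} => (k'.1 : {x // x ∈ s} → R) j) ⊗ₜ[R] (e j))
            = (f : {x // x ∈ s} → R) j • e j := by
          intro j
          rw [hEtmul]
        rw [Finset.sum_congr rfl (fun j _ => hc j)]
        exact hsingle f
      have h2 : E y = ∑ q ∈ F, q.1 k0 • (q.2.1 : {x // x ∈ s} → R) := by
        rw [← hy', hF, map_sum, map_sum]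
        apply Finset.sum_congr rfl
        intro q _
        rw [LinearMap.lTensor_tmul, hEtmul]
        rfl
      rw [← h1, h2]
      apply Submodule.sum_mem
      intro q hq
      apply Submodule.smul_mem
      apply Submodule.subset_span
      simp only [Finset.coe_image, Set.mem_image, Finset.mem_coe]
      exact ⟨q, hq, rfl⟩
  haveI : Module.FinitePresentation R M :=
    Module.finitePresentation_of_surjective p psurj hKfg
  haveI : Module.Projective R M := Module.freeLocus_eq_univ_iff.mp Module.freeLocus_eq_univ
  exact ⟨inferInstance, inferInstance⟩
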